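/- Suppose X ∈ ℝ^{n×n} satisfies the NSARE A^T X + X A − X B_u Θ_{n_u} B_u^T X + C^T Θ_{n_y} C = 0. Then for every s ∈ ℂ such that sI − A and −sI − A^T are invertible, −X(sI − A)⁻¹ − (−sI − A^T)⁻¹X + (−sI − A^T)⁻¹ C^T Θ_{n_y} C (sI − A)⁻¹ = (−sI − A^T)⁻¹ X B_u Θ_{n_u} B_u^T X (sI − A)⁻¹. -/

import Mathlib

open Matrix

def Theta (m : ℕ) : Matrix (Fin m) (Fin m) ℝ :=
  Matrix.of fun i j =>
    if i.val % 2 = 0 ∧ j.val = i.val + 1 then (1 : ℝ)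
    else if j.val % 2 = 0 ∧ i.val = j.val + 1 then (-1 : ℝ)
    else 0

private lemma aux_ring {α : Type*} [Ring α] (M Mi N Ni X P Q : α)
    (hM : M * Mi = 1) (hN : Ni * N = 1)
    (hE : -(N * X) - X * M + P = Q) :
    -(X * Mi) - Ni * X + Ni * P * Mi = Ni * Q * Mi := by
  have e0 : Ni * (-(N * X) - X * M + P) * Mi
      = -(Ni * (N * X) * Mi) - Ni * (X * M) * Mi + Ni * P * Mi := by noncomm_ring
  have e1 : Ni * (N * X) * Mi = Ni * N * (X * Mi) := by noncomm_ring
  have e2 : Ni * (X * M) * Mi = Ni * X * (M * Mi) := by noncomm_ring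
  rw [← hE, e0, e1, e2, hM, hN, one_mul, mul_one]

theorem stmt_16 (n nu ny : ℕ) (hn : Even n) (hn0 : 0 < n)
    (hnu : Even nu) (hnu0 : 0 < nu) (hny : Even ny) (hny0 : 0 < ny)
    (A : Matrix (Fin n) (Fin n) ℝ) (Bu : Matrix (Fin n) (Fin nu) ℝ)
    (C : Matrix (Fin ny) (Fin n) ℝ)
    (X : Matrix (Fin n) (Fin n) ℝ)
    (hX : Aᵀ * X + X * A - X * Bu * Theta nu * Buᵀ * X + Cᵀ * Theta ny * C = 0)
    (s : ℂ)
    (Ac : Matrix (Fin n) (Fin n) ℂ) (hAc : Ac = A.map Complex.ofReal)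
    (Buc : Matrix (Fin n) (Fin nu) ℂ) (hBuc : Buc = Bu.map Complex.ofReal)
    (Cc : Matrix (Fin ny) (Fin n) ℂ) (hCc : Cc = C.map Complex.ofReal)
    (Xc : Matrix (Fin n) (Fin n) ℂ) (hXc : Xc = X.map Complex.ofReal)
    (hs1 : IsUnit (s • (1 : Matrix (Fin n) (Fin n) ℂ) - Ac).det)
    (hs2 : IsUnit (-(s • (1 : Matrix (Fin n) (Fin n) ℂ)) - Acᵀ).det) :
    -(Xc * (s • 1 - Ac)⁻¹) - (-(s • 1) - Acᵀ)⁻¹ * Xc +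
        (-(s • 1) - Acᵀ)⁻¹ * Ccᵀ * (Theta ny).map Complex.ofReal * Cc * (s • 1 - Ac)⁻¹ =
      (-(s • 1) - Acᵀ)⁻¹ * Xc * Buc * (Theta nu).map Complex.ofReal * Bucᵀ * Xc *
        (s • 1 - Ac)⁻¹ := by
  have hMM : (s • 1 - Ac) * (s • 1 - Ac)⁻¹ = 1 := Matrix.mul_nonsing_inv _ hs1
  have hNN : (-(s • 1) - Acᵀ)⁻¹ * (-(s • 1) - Acᵀ) = 1 := Matrix.nonsing_inv_mul _ hs2
  have hE0 : Acᵀ * Xc + Xc * Ac - Xc * Buc * (Theta nu).map Complex.ofReal * Bucᵀ * Xc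
      + Ccᵀ * (Theta ny).map Complex.ofReal * Cc = 0 := by
    subst hAc hBuc hCc hXc
    have := congrArg (fun Y => Y.map (Complex.ofRealHom : ℝ →+* ℂ)) hX
    simp [Matrix.map_mul, Matrix.map_add, Matrix.map_sub, Matrix.map_zero,
      Matrix.transpose_map] at this
    exact this
  have hE : -((-(s • 1) - Acᵀ) * Xc) - Xc * (s • 1 - Ac)
      + Ccᵀ * (Theta ny).map Complex.ofReal * Cc
      = Xc * Buc * (Theta nu).map Complex.ofReal * Bucᵀ * Xc := by
    have h : -((-(s • 1) - Acᵀ) * Xc) - Xc * (s • 1 - Ac) = Acᵀ * Xc + Xc * Ac := by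
      simp only [sub_mul, mul_sub, neg_mul, mul_neg, neg_sub, neg_neg,
        smul_mul_assoc, mul_smul_comm, Matrix.one_mul, Matrix.mul_one]
      abel
    rw [h, show Acᵀ * Xc + Xc * Ac + Ccᵀ * (Theta ny).map Complex.ofReal * Cc
      = (Acᵀ * Xc + Xc * Ac - Xc * Buc * (Theta nu).map Complex.ofReal * Bucᵀ * Xc
        + Ccᵀ * (Theta ny).map Complex.ofReal * Cc)
        + Xc * Buc * (Theta nu).map Complex.ofReal * Bucᵀ * Xc from by abel, hE0, zero_add]
  have := aux_ring (s • 1 - Ac) (s • 1 - Ac)⁻¹ (-(s • 1) - Acᵀ) (-(s • 1) - Acᵀ)⁻¹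
    Xc (Ccᵀ * (Theta ny).map Complex.ofReal * Cc)
    (Xc * Buc * (Theta nu).map Complex.ofReal * Bucᵀ * Xc) hMM hNN hE
  simp only [Matrix.mul_assoc] at this ⊢
  exact this
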